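/- Let μ, ρ, ν be finite nonempty sets and consider functions f_x : μ → Fin 2, f_y : ν → Fin 2, f_a : Fin 2 × ρ → Fin 2, f_b : Fin 2 × ρ → Fin 2 (the Bell structure: x ← μ, y ← ν, a ← (x, ρ), b ← (y, ρ)). Define the observed quadruple for (λ, r, κ) ∈ μ × ρ × ν as (x, a, b, y) with x = f_x(λ), y = f_y(κ), a = f_a(x, r), b = f_b(y, r). Then the image of the observation map over μ × ρ × ν cannot equal the PR-box support {(0,0,0,0),(0,1,1,0),(0,0,0,1),(0,1,1,1),(1,0,0,0),(1,1,1,0),(1,0,1,1),(1,1,0,1)}. -/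
import Mathlib


/-- The PR-box support is possibilistically incompatible with
the Bell causal structure. -/
theorem bell_pr_box_incompatible
    {μ ρ ν : Type*} [Fintype μ] [Fintype ρ] [Fintype ν]
    [Nonempty μ] [Nonempty ρ] [Nonempty ν]
    (f_x : μ → Fin 2) (f_y : ν → Fin 2)
    (f_a : Fin 2 × ρ → Fin 2) (f_b : Fin 2 × ρ → Fin 2) :
    Set.range (fun t : μ × ρ × ν =>
        (f_x t.1, f_a (f_x t.1, t.2.1), f_b (f_y t.2.2, t.2.1), f_y t.2.2))
      ≠ ({((0 : Fin 2), (0 : Fin 2), (0 : Fin 2), (0 : Fin 2)),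
          (0, 1, 1, 0), (0, 0, 0, 1), (0, 1, 1, 1),
          (1, 0, 0, 0), (1, 1, 1, 0), (1, 0, 1, 1), (1, 1, 0, 1)} :
          Set (Fin 2 × Fin 2 × Fin 2 × Fin 2)) := by
  intro h
  -- get a hidden variable producing x = 0, y = 0
  have h0 : ((0 : Fin 2), (0 : Fin 2), (0 : Fin 2), (0 : Fin 2)) ∈
      Set.range (fun t : μ × ρ × ν =>
        (f_x t.1, f_a (f_x t.1, t.2.1), f_b (f_y t.2.2, t.2.1), f_y t.2.2)) := by
    rw [h]; left; rfl
  -- get a hidden variable producing x = 1, y = 1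
  have h1 : ((1 : Fin 2), (0 : Fin 2), (1 : Fin 2), (1 : Fin 2)) ∈
      Set.range (fun t : μ × ρ × ν =>
        (f_x t.1, f_a (f_x t.1, t.2.1), f_b (f_y t.2.2, t.2.1), f_y t.2.2)) := by
    rw [h]; right; right; right; right; right; right; left; rfl
  obtain ⟨⟨l0, r0, k0⟩, e0⟩ := h0
  obtain ⟨⟨l1, r1, k1⟩, e1⟩ := h1
  simp only [Prod.mk.injEq] at e0 e1
  have hx0 : f_x l0 = 0 := e0.1
  have hy0 : f_y k0 = 0 := e0.2.2.2
  have hx1 : f_x l1 = 1 := e1.1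
  have hy1 : f_y k1 = 1 := e1.2.2.2
  have hmem : ∀ l r k,
      (f_x l, f_a (f_x l, r), f_b (f_y k, r), f_y k) ∈
        ({((0 : Fin 2), (0 : Fin 2), (0 : Fin 2), (0 : Fin 2)),
          (0, 1, 1, 0), (0, 0, 0, 1), (0, 1, 1, 1),
          (1, 0, 0, 0), (1, 1, 1, 0), (1, 0, 1, 1), (1, 1, 0, 1)} :
          Set (Fin 2 × Fin 2 × Fin 2 × Fin 2)) := by
    intro l r k
    rw [← h]
    exact ⟨(l, r, k), rfl⟩
  have t00 := hmem l0 r0 k0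
  have t01 := hmem l0 r0 k1
  have t10 := hmem l1 r0 k0
  have t11 := hmem l1 r0 k1
  rw [hx0, hy0] at t00
  rw [hx0, hy1] at t01
  rw [hx1, hy0] at t10
  rw [hx1, hy1] at t11
  obtain ⟨a0, ha0⟩ : ∃ v, f_a (0, r0) = v := ⟨_, rfl⟩
  obtain ⟨a1, ha1⟩ : ∃ v, f_a (1, r0) = v := ⟨_, rfl⟩
  obtain ⟨b0, hb0⟩ : ∃ v, f_b (0, r0) = v := ⟨_, rfl⟩
  obtain ⟨b1, hb1⟩ : ∃ v, f_b (1, r0) = v := ⟨_, rfl⟩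
  rw [ha0, hb0] at t00
  rw [ha0, hb1] at t01
  rw [ha1, hb0] at t10
  rw [ha1, hb1] at t11
  clear h hmem e0 e1 ha0 ha1 hb0 hb1 hx0 hx1 hy0 hy1
  have two : ∀ v : Fin 2, v = 0 ∨ v = 1 := by decide
  simp only [Set.mem_insert_iff, Set.mem_singleton_iff, Prod.mk.injEq] at t00 t01 t10 t11
  rcases two a0 with rfl | rfl <;> rcases two a1 with rfl | rfl <;>
    rcases two b0 with rfl | rfl <;> rcases two b1 with rfl | rfl <;>
    simp_all
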